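/- For every n ≥ 0, f(n) ≡ p(n) (mod 4), where f(n) is defined by ∑_{n≥0} f(n) q^n = ∏_{i≥1} (1+q^{2i-1}) / ((1-q^{4i})(1+q^{4i-2})^2) and p(n) is the partition function. -/

import Mathlib

open PowerSeries Finset

namespace Stmt13Aux

noncomputable section
open scoped Classical

variable {α : Type*}

open Finset.HasAntidiagonal

/-- A convenience constructor for the power series whose coefficients indicate a subset. -/
def indicatorSeries (α : Type*) [Semiring α] (s : Set ℕ) : PowerSeries α :=
  PowerSeries.mk fun n => if n ∈ s then 1 else 0

theorem coeff_indicator (s : Set ℕ) [Semiring α] (n : ℕ) :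
    coeff n (indicatorSeries α s) = if n ∈ s then 1 else 0 :=
  coeff_mk _ _

theorem coeff_indicator_pos (s : Set ℕ) [Semiring α] (n : ℕ) (h : n ∈ s) :
    coeff n (indicatorSeries α s) = 1 := by rw [coeff_indicator, if_pos h]

theorem coeff_indicator_neg (s : Set ℕ) [Semiring α] (n : ℕ) (h : n ∉ s) :
    coeff n (indicatorSeries α s) = 0 := by rw [coeff_indicator, if_neg h]

theorem constantCoeff_indicator (s : Set ℕ) [Semiring α] :
    constantCoeff (indicatorSeries α s) = if 0 ∈ s then 1 else 0 :=
  rfl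

-- The main workhorse of the partition theorem proof.
theorem partialGF_prop (α : Type*) [CommSemiring α] (n : ℕ) (s : Finset ℕ) (hs : ∀ i ∈ s, 0 < i)
    (c : ℕ → Set ℕ) (hc : ∀ i, i ∉ s → 0 ∈ c i) :
    #{p : n.Partition | (∀ j, p.parts.count j ∈ c j) ∧ ∀ j ∈ p.parts, j ∈ s} =
      coeff n (∏ i ∈ s, indicatorSeries α ((· * i) '' c i)) := by
  simp_rw [coeff_prod, coeff_indicator, prod_boole, sum_boole]
  apply congr_arg
  simp only [mem_univ, forall_true_left, not_and, not_forall, exists_prop,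
    Set.mem_image, not_exists]
  set φ : (a : Nat.Partition n) →
    a ∈ filter (fun p ↦ (∀ (j : ℕ), Multiset.count j p.parts ∈ c j) ∧ ∀ j ∈ p.parts, j ∈ s) univ →
    ℕ →₀ ℕ := fun p _ => {
      toFun := fun i => Multiset.count i p.parts • i
      support := Finset.filter (fun i => i ≠ 0) p.parts.toFinset
      mem_support_toFun := fun a => by
        simp only [smul_eq_mul, ne_eq, mul_eq_zero, Multiset.count_eq_zero]
        rw [not_or, not_not]
        simp only [Multiset.mem_toFinset, not_not, mem_filter] }
  refine Finset.card_bij φ ?_ ?_ ?_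
  · intro a ha
    simp only [φ, not_forall, not_exists, not_and, exists_prop, mem_filter]
    rw [mem_finsuppAntidiag]
    dsimp only [ne_eq, smul_eq_mul, id_eq, eq_mpr_eq_cast, le_eq_subset, Finsupp.coe_mk]
    simp only [mem_univ, forall_true_left, not_and, not_forall, exists_prop,
      mem_filter, true_and] at ha
    refine ⟨⟨?_, fun i ↦ ?_⟩, fun i _ ↦ ⟨a.parts.count i, ha.1 i, rfl⟩⟩
    · conv_rhs => simp [← a.parts_sum]
      rw [sum_multiset_count_of_subset _ s]
      · simp only [smul_eq_mul]
      · intro i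
        simp only [Multiset.mem_toFinset, not_not, mem_filter]
        apply ha.2
    · simp only [ne_eq, Multiset.mem_toFinset, not_not, mem_filter, and_imp]
      exact fun hi _ ↦ ha.2 i hi
  · intro p₁ hp₁ p₂ hp₂ h
    apply Nat.Partition.ext
    simp only [true_and, mem_univ, mem_filter] at hp₁ hp₂
    ext i
    simp only [φ, ne_eq, Multiset.mem_toFinset, not_not, smul_eq_mul, Finsupp.mk.injEq] at h
    by_cases hi : i = 0
    · rw [hi]
      rw [Multiset.count_eq_zero_of_notMem]
      · rw [Multiset.count_eq_zero_of_notMem]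
        intro a; exact Nat.lt_irrefl 0 (hs 0 (hp₂.2 0 a))
      intro a; exact Nat.lt_irrefl 0 (hs 0 (hp₁.2 0 a))
    · rw [← mul_left_inj' hi]
      rw [funext_iff] at h
      exact h.2 i
  · simp only [φ, mem_filter, mem_finsuppAntidiag, mem_univ, exists_prop, true_and, and_assoc]
    rintro f ⟨hf, hf₃, hf₄⟩
    have hf' : f ∈ finsuppAntidiag s n := mem_finsuppAntidiag.mpr ⟨hf, hf₃⟩
    simp only [mem_finsuppAntidiag] at hf'
    refine ⟨⟨∑ i ∈ s, Multiset.replicate (f i / i) i, ?_, ?_⟩, ?_, ?_, ?_⟩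
    · intro i hi
      simp only [exists_prop, Multiset.mem_sum, mem_map, Function.Embedding.coeFn_mk] at hi
      rcases hi with ⟨t, ht, z⟩
      apply hs
      rwa [Multiset.eq_of_mem_replicate z]
    · simp_rw [Multiset.sum_sum, Multiset.sum_replicate, Nat.nsmul_eq_mul]
      rw [← hf'.1]
      refine sum_congr rfl fun i hi => Nat.div_mul_cancel ?_
      rcases hf₄ i hi with ⟨w, _, hw₂⟩
      rw [← hw₂]
      exact dvd_mul_left _ _
    · intro i
      simp_rw [Multiset.count_sum', Multiset.count_replicate, sum_ite_eq']
      split_ifs with h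
      · rcases hf₄ i h with ⟨w, hw₁, hw₂⟩
        rwa [← hw₂, Nat.mul_div_cancel _ (hs i h)]
      · exact hc _ h
    · intro i hi
      rw [Multiset.mem_sum] at hi
      rcases hi with ⟨j, hj₁, hj₂⟩
      rwa [Multiset.eq_of_mem_replicate hj₂]
    · ext i
      simp_rw [Multiset.count_sum', Multiset.count_replicate, sum_ite_eq']
      simp only [ne_eq, Multiset.mem_toFinset, not_not, smul_eq_mul, ite_mul,
        zero_mul, Finsupp.coe_mk]
      split_ifs with h
      · apply Nat.div_mul_cancel
        rcases hf₄ i h with ⟨w, _, hw₂⟩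
        apply Dvd.intro_left _ hw₂
      · apply symm
        rw [← Finsupp.notMem_support_iff]
        exact notMem_mono hf'.2 h



/-- geometric series identity -/
theorem indicator_mul_one_sub (α : Type*) [CommRing α] (i : ℕ) (hi : 0 < i) :
    indicatorSeries α {k | i ∣ k} * (1 - X ^ i) = 1 := by
  ext n
  rw [mul_sub, mul_one, map_sub, coeff_mul_X_pow', coeff_indicator, coeff_one]
  simp only [Set.mem_setOf_eq]
  by_cases h : i ∣ n
  · rcases Nat.eq_zero_or_pos n with rfl | hn
    · rw [if_pos h, if_neg (by omega), if_pos rfl]; ring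
    · have hin : i ≤ n := Nat.le_of_dvd hn h
      rw [if_pos h, if_pos hin, coeff_indicator,
        if_pos (show n - i ∈ {k | i ∣ k} from Nat.dvd_sub h dvd_rfl), if_neg (by omega)]
      ring
  · have hn0 : n ≠ 0 := fun e => h (by simp [e])
    rw [if_neg h, if_neg hn0]
    split_ifs with hin
    · rw [coeff_indicator, if_neg, sub_zero]
      intro hd
      simp only [Set.mem_setOf_eq] at hd
      exact h (by have := Nat.dvd_add hd (dvd_refl i); rwa [Nat.sub_add_cancel hin] at this)
    · simp

theorem card_partition_eq_coeff (α : Type*) [CommSemiring α] (n K : ℕ) (hn : n ≤ K) :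
    (Nat.card (Nat.Partition n) : α) =
      coeff n (∏ k ∈ Finset.range K, indicatorSeries α {j | (k + 1) ∣ j}) := by
  have hmap : (∏ k ∈ Finset.range K, indicatorSeries α {j | (k + 1) ∣ j}) =
      ∏ i ∈ (Finset.range K).map ⟨Nat.succ, Nat.succ_injective⟩,
        indicatorSeries α ((· * i) '' Set.univ) := by
    rw [Finset.prod_map]
    refine Finset.prod_congr rfl fun k _ => congrArg _ ?_
    ext j
    simp only [Set.image_univ, Set.mem_range, Set.mem_setOf_eq, Function.Embedding.coeFn_mk,
      Nat.succ_eq_add_one]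
    constructor
    · rintro ⟨c, hc⟩; exact ⟨c, by rw [mul_comm]; exact hc.symm⟩
    · rintro ⟨c, hc⟩; exact ⟨c, by rw [← hc, mul_comm]⟩
  rw [hmap, ← partialGF_prop α n _ (fun i hi => by
      simp only [Finset.mem_map, Function.Embedding.coeFn_mk] at hi
      obtain ⟨a, -, rfl⟩ := hi; exact Nat.succ_pos a)
    (fun _ => Set.univ) (fun _ _ => trivial)]
  congr 1
  have huniv : (Finset.univ.filter fun p : n.Partition =>
      (∀ j, p.parts.count j ∈ (Set.univ : Set ℕ)) ∧
      ∀ j ∈ p.parts, j ∈ (Finset.range K).map ⟨Nat.succ, Nat.succ_injective⟩) =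
      Finset.univ := by
    apply Finset.filter_true_of_mem
    intro p _
    refine ⟨fun _ => trivial, fun j hj => ?_⟩
    have h1 : 0 < j := p.parts_pos hj
    have h2 : j ≤ n := by
      rw [← p.parts_sum]
      exact Multiset.single_le_sum (fun _ _ => Nat.zero_le _) j hj
    simp only [Finset.mem_map, Finset.mem_range, Function.Embedding.coeFn_mk]
    exact ⟨j - 1, by omega, by omega⟩
  rw [show #{p : n.Partition | (∀ j, p.parts.count j ∈ (Set.univ : Set ℕ)) ∧
      ∀ j ∈ p.parts, j ∈ (Finset.range K).map ⟨Nat.succ, Nat.succ_injective⟩} =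
      Fintype.card n.Partition from by rw [huniv, Finset.card_univ],
    Nat.card_eq_fintype_card]
open YoungDiagram

theorem list_sum_range_map (f : ℕ → ℕ) (n : ℕ) :
    ((List.range n).map f).sum = ∑ i ∈ Finset.range n, f i := by
  induction n with
  | zero => simp
  | succ n ih => rw [List.range_succ, List.map_append, List.sum_append,
      Finset.sum_range_succ, ih]; simp

theorem young_card_eq_sum_rowLens (μ : YoungDiagram) : μ.card = μ.rowLens.sum := by
  have hcells : μ.cells = (Finset.range (μ.colLen 0)).biUnion (fun i => μ.row i) := by
    ext ⟨i, j⟩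
    simp only [Finset.mem_biUnion, Finset.mem_range, mem_row_iff, YoungDiagram.mem_cells]
    constructor
    · intro h
      exact ⟨i, by
        rw [← YoungDiagram.mem_iff_lt_colLen]
        exact μ.up_left_mem le_rfl (Nat.zero_le _) h, h, rfl⟩
    · rintro ⟨i', -, h, rfl⟩; exact h
  have hdisj : ∀ i ∈ Finset.range (μ.colLen 0), ∀ i' ∈ Finset.range (μ.colLen 0),
      i ≠ i' → Disjoint (μ.row i) (μ.row i') := by
    intro i _ i' _ hii
    rw [Finset.disjoint_left]
    intro c hc hc'
    rw [mem_row_iff] at hc hc'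
    exact hii (hc.2.symm.trans hc'.2)
  rw [YoungDiagram.card, hcells, Finset.card_biUnion hdisj, YoungDiagram.rowLens,
    list_sum_range_map]
  exact Finset.sum_congr rfl fun i _ => (μ.rowLen_eq_card).symm

theorem ofRowLens_congr {w w' : List ℕ} (e : w = w') {h : w.SortedGE}
    {h' : w'.SortedGE} : YoungDiagram.ofRowLens w h = YoungDiagram.ofRowLens w' h' := by
  subst e; rfl

/-- Young diagrams with `n` cells are equivalent to partitions of `n`. -/
def youngEquivPartition (n : ℕ) : {μ : YoungDiagram // μ.card = n} ≃ Nat.Partition n where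
  toFun μ := ⟨(μ.1.rowLens : Multiset ℕ),
    fun hi => μ.1.pos_of_mem_rowLens _ (by simpa using hi),
    by rw [Multiset.sum_coe, ← young_card_eq_sum_rowLens]; exact μ.2⟩
  invFun p := ⟨YoungDiagram.ofRowLens (p.parts.sort (· ≥ ·)) (Multiset.pairwise_sort p.parts (· ≥ ·)).sortedGE,
    by
      rw [young_card_eq_sum_rowLens, YoungDiagram.rowLens_ofRowLens_eq_self
        (fun x hx => p.parts_pos (by rwa [← Multiset.mem_sort (r := (· ≥ ·))]))]
      rw [← Multiset.sum_coe, Multiset.sort_eq]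
      exact p.parts_sum⟩
  left_inv := by
    rintro ⟨μ, hμ⟩
    apply Subtype.ext
    have hperm : (Multiset.sort (μ.rowLens : Multiset ℕ) (· ≥ ·)) = μ.rowLens := by
      apply List.Perm.eq_of_sortedGE (Multiset.pairwise_sort _ _).sortedGE μ.rowLens_sorted
        (Multiset.coe_eq_coe.mp (by rw [Multiset.sort_eq]))
    dsimp only
    refine Eq.trans ?_ (YoungDiagram.ofRowLens_to_rowLens_eq_self (μ := μ))
    exact ofRowLens_congr (h := (Multiset.pairwise_sort _ _).sortedGE) (h' := μ.rowLens_sorted) hperm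
  right_inv := by
    intro p
    apply Nat.Partition.ext
    simp only
    rw [YoungDiagram.rowLens_ofRowLens_eq_self
      (fun x hx => p.parts_pos (by rwa [← Multiset.mem_sort (r := (· ≥ ·))])), Multiset.sort_eq]

theorem card_young_eq_card_partition (n : ℕ) :
    Nat.card {μ : YoungDiagram // μ.card = n} = Nat.card (Nat.Partition n) :=
  Nat.card_congr (youngEquivPartition n)

section PS
variable {R : Type*} [CommRing R]
open PowerSeries

theorem coeff_X_pow_mul_of_lt {m j : ℕ} (h : m < j) (ψ : R⟦X⟧) :
    coeff m ((X : R⟦X⟧) ^ j * ψ) = 0 := by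
  rw [coeff_X_pow_mul', if_neg (by omega)]

/-- Equality of power series up to degree `n`. -/
def EqUpTo (n : ℕ) (φ ψ : R⟦X⟧) : Prop := ∀ m ≤ n, coeff m φ = coeff m ψ

theorem EqUpTo.refl {n : ℕ} (φ : R⟦X⟧) : EqUpTo n φ φ := fun _ _ => rfl

theorem EqUpTo.mul {n : ℕ} {a b c d : R⟦X⟧} (h1 : EqUpTo n a b) (h2 : EqUpTo n c d) :
    EqUpTo n (a * c) (b * d) := by
  intro m hm
  rw [coeff_mul, coeff_mul]
  refine Finset.sum_congr rfl ?_
  rintro ⟨x, y⟩ hxy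
  rw [Finset.HasAntidiagonal.mem_antidiagonal] at hxy
  rw [h1 x (by omega), h2 y (by omega)]

theorem prod_one_add_high {ι : Type*} (n : ℕ) (s : Finset ι) (g : ι → R⟦X⟧)
    (hg : ∀ k ∈ s, ∃ u, g k = 1 + X ^ (n + 1) * u) :
    ∃ u, ∏ k ∈ s, g k = 1 + X ^ (n + 1) * u := by
  classical
  induction s using Finset.cons_induction with
  | empty => exact ⟨0, by simp⟩
  | cons a s ha ih =>
    obtain ⟨u, hu⟩ := hg a (Finset.mem_cons_self _ _)
    obtain ⟨v, hv⟩ := ih fun k hk => hg k (Finset.mem_cons_of_mem hk)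
    rw [Finset.prod_cons, hu, hv]
    exact ⟨u + v + X ^ (n + 1) * u * v, by ring⟩

theorem eqUpTo_one {n : ℕ} {φ : R⟦X⟧} (h : ∃ u, φ = 1 + X ^ (n + 1) * u) :
    EqUpTo n φ 1 := by
  obtain ⟨u, rfl⟩ := h
  intro m hm
  rw [map_add, coeff_X_pow_mul_of_lt (by omega), add_zero]

theorem coeff_mul_prod_range (g : ℕ → R⟦X⟧) (hg : ∀ k, ∃ u, g k = 1 + X ^ (k + 1) * u)
    (φ : R⟦X⟧) (m N : ℕ) (hN : m < N) :
    coeff m (φ * ∏ k ∈ Finset.range N, g k) =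
      coeff m (φ * ∏ k ∈ Finset.range (m + 1), g k) := by
  induction N with
  | zero => omega
  | succ N ih =>
    rcases Nat.lt_or_ge m N with h | h
    · obtain ⟨u, hu⟩ := hg N
      rw [Finset.prod_range_succ, hu]
      have e : φ * ((∏ k ∈ Finset.range N, g k) * (1 + X ^ (N + 1) * u)) =
          φ * ∏ k ∈ Finset.range N, g k +
            X ^ (N + 1) * (φ * (∏ k ∈ Finset.range N, g k) * u) := by ring
      rw [e, map_add, coeff_X_pow_mul_of_lt (by omega), add_zero, ih h]
    · have : N = m := by omega
      subst this
      rfl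

theorem prod_range_two_mul (h : ℕ → R⟦X⟧) (t : ℕ) :
    ∏ k ∈ Finset.range (2 * t), h k =
      (∏ j ∈ Finset.range t, h (2 * j)) * ∏ j ∈ Finset.range t, h (2 * j + 1) := by
  induction t with
  | zero => simp
  | succ t ih =>
    rw [show 2 * (t + 1) = 2 * t + 1 + 1 by ring, Finset.prod_range_succ,
      Finset.prod_range_succ, ih, Finset.prod_range_succ, Finset.prod_range_succ]
    ring

theorem key (h4 : (4 : R) = 0) (f' : ℕ → R)
    (hf : ∀ m : ℕ,
      coeff m (PowerSeries.mk f' *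
        ∏ k ∈ Finset.range (m + 1),
          ((1 - (X : R⟦X⟧) ^ (4 * (k + 1))) * (1 + (X : R⟦X⟧) ^ (4 * k + 2)) ^ 2)) =
      coeff m (∏ k ∈ Finset.range (m + 1), (1 + (X : R⟦X⟧) ^ (2 * k + 1))))
    (n : ℕ) : f' n = (Nat.card (Nat.Partition n) : R) := by
  have h4' : (4 : R⟦X⟧) = 0 := by
    rw [← map_ofNat (C (R := R)) 4, show ((4 : R)) = 0 from h4, map_zero]
  have hsq : ∀ j : ℕ, (1 + (X : R⟦X⟧) ^ j) ^ 2 = (1 - X ^ j) ^ 2 := by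
    intro j
    linear_combination (X : R⟦X⟧) ^ j * h4'
  simp only [hsq] at hf
  set M := n + 1 with hM
  set N := 2 * M with hN
  set K := 2 * N with hK
  set F : R⟦X⟧ := PowerSeries.mk f' with hF
  set gA : ℕ → R⟦X⟧ := fun k => (1 - X ^ (4 * (k + 1))) * (1 - X ^ (4 * k + 2)) ^ 2 with hgAdef
  have hgA : ∀ k, ∃ u, gA k = 1 + X ^ (k + 1) * u := by
    intro k
    refine ⟨-2 * X ^ (3 * k + 1) + X ^ (7 * k + 3) - X ^ (3 * k + 3) + 2 * X ^ (7 * k + 5)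
      - X ^ (11 * k + 7), ?_⟩
    simp only [hgAdef]
    ring
  have hB : ∀ k, ∃ u, (1 + (X : R⟦X⟧) ^ (2 * k + 1)) = 1 + X ^ (k + 1) * u :=
    fun k => ⟨X ^ k, by ring⟩
  set A : R⟦X⟧ := ∏ k ∈ Finset.range M, gA k with hA
  set BN : R⟦X⟧ := ∏ k ∈ Finset.range N, (1 + X ^ (2 * k + 1)) with hBN
  set Cs : R⟦X⟧ := ∏ k ∈ Finset.range K, (1 - X ^ (k + 1)) with hCs
  set T : R⟦X⟧ := ∏ k ∈ Finset.Ico M N, (1 - X ^ (4 * k + 2)) with hT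
  set P : R⟦X⟧ := ∏ k ∈ Finset.range K, indicatorSeries R {j | (k + 1) ∣ j} with hP
  -- Step 1
  have hFA : EqUpTo n (F * A) BN := by
    intro m hm
    have e1 := coeff_mul_prod_range gA hgA F m M (by omega)
    have e3 := coeff_mul_prod_range (fun k => 1 + (X : R⟦X⟧) ^ (2 * k + 1)) hB
      (1 : R⟦X⟧) m N (by omega)
    try simp only [one_mul] at e3
    rw [hA, hBN, e1, hf m]
    exact e3.symm
  -- Step 2
  have e1 : BN * (∏ k ∈ Finset.range N, (1 - X ^ (2 * k + 1))) =
      ∏ k ∈ Finset.range N, (1 - X ^ (4 * k + 2)) := by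
    rw [hBN, ← Finset.prod_mul_distrib]
    exact Finset.prod_congr rfl fun k _ => by ring
  have e2 : Cs = (∏ j ∈ Finset.range N, (1 - X ^ (2 * j + 1))) *
      ∏ j ∈ Finset.range N, (1 - X ^ (2 * j + 2)) := by
    rw [hCs, hK, prod_range_two_mul (fun k => 1 - X ^ (k + 1)) N]
  have e3 : (∏ j ∈ Finset.range N, (1 - (X : R⟦X⟧) ^ (2 * j + 2))) =
      (∏ i ∈ Finset.range M, (1 - X ^ (4 * i + 2))) *
        ∏ i ∈ Finset.range M, (1 - X ^ (4 * i + 4)) := by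
    rw [hN, prod_range_two_mul (fun j => 1 - (X : R⟦X⟧) ^ (2 * j + 2)) M]
    congr 1
    · exact Finset.prod_congr rfl fun i _ => by rw [show 2 * (2 * i) + 2 = 4 * i + 2 by omega]
    · exact Finset.prod_congr rfl fun i _ => by
        rw [show 2 * (2 * i + 1) + 2 = 4 * i + 4 by omega]
  have e4 : (∏ k ∈ Finset.range N, (1 - (X : R⟦X⟧) ^ (4 * k + 2))) =
      (∏ k ∈ Finset.range M, (1 - X ^ (4 * k + 2))) * T := by
    rw [hT, Finset.range_eq_Ico, ← Finset.prod_Ico_consecutive _ (Nat.zero_le M) (by omega),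
      ← Finset.range_eq_Ico]
  have e5 : A = (∏ k ∈ Finset.range M, (1 - (X : R⟦X⟧) ^ (4 * k + 4))) *
      (∏ k ∈ Finset.range M, (1 - X ^ (4 * k + 2))) ^ 2 := by
    rw [hA, ← Finset.prod_pow, ← Finset.prod_mul_distrib]
    refine Finset.prod_congr rfl fun k _ => ?_
    simp only [hgAdef]
    rw [show 4 * (k + 1) = 4 * k + 4 by omega]
  have hBC : BN * Cs = A * T := by
    have h1 : BN * Cs = (BN * (∏ k ∈ Finset.range N, (1 - X ^ (2 * k + 1)))) *
        ((∏ i ∈ Finset.range M, (1 - X ^ (4 * i + 2))) *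
          ∏ i ∈ Finset.range M, (1 - X ^ (4 * i + 4))) := by
      rw [e2, e3]; ring
    rw [e1, e4] at h1
    rw [h1, e5]; ring
  -- Step 3
  have hThigh : ∃ u, T = 1 + X ^ (n + 1) * u := by
    rw [hT]
    refine prod_one_add_high n _ _ fun k hk => ?_
    rw [Finset.mem_Ico] at hk
    have h1 : M ≤ k := hk.1
    have hk1 : n + 1 ≤ 4 * k + 2 := by omega
    refine ⟨-X ^ (4 * k + 2 - (n + 1)), ?_⟩
    rw [mul_neg, ← pow_add, show n + 1 + (4 * k + 2 - (n + 1)) = 4 * k + 2 from by omega]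
    ring
  -- Step 4: units
  have hX0 : ∀ j : ℕ, j ≠ 0 → constantCoeff ((X : R⟦X⟧) ^ j) = 0 := by
    intro j hj
    rw [map_pow, constantCoeff_X, zero_pow hj]
  have hconstA : constantCoeff A = 1 := by
    rw [hA, map_prod]
    refine Finset.prod_eq_one fun k _ => ?_
    simp only [hgAdef, map_mul, map_pow, map_sub, map_one,
      hX0 (4 * (k + 1)) (by omega), hX0 (4 * k + 2) (by omega)]
    norm_num
  set Ai : R⟦X⟧ := PowerSeries.invOfUnit A 1 with hAidef
  have hAi : A * Ai = 1 := PowerSeries.mul_invOfUnit A 1 (by rw [hconstA]; rfl)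
  have hPC : P * Cs = 1 := by
    rw [hP, hCs, ← Finset.prod_mul_distrib]
    exact Finset.prod_eq_one fun k _ => indicator_mul_one_sub R (k + 1) k.succ_pos
  -- Step 5
  have hend : BN * Ai = T * P := by
    have h1 : BN * Ai = ((BN * Cs) * P) * Ai := by
      have hCP : Cs * P = 1 := by rw [mul_comm]; exact hPC
      calc BN * Ai = BN * Ai * (Cs * P) := by rw [hCP, mul_one]
        _ = ((BN * Cs) * P) * Ai := by ring
    rw [hBC] at h1
    rw [h1, show ((A * T) * P) * Ai = (A * Ai) * (T * P) by ring, hAi, one_mul]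
  have hchain : coeff n F = coeff n P := by
    have hF1 : F = (F * A) * Ai := by rw [mul_assoc, hAi, mul_one]
    have c1 : coeff n ((F * A) * Ai) = coeff n (BN * Ai) :=
      (hFA.mul (EqUpTo.refl Ai)) n le_rfl
    have c2 : coeff n (T * P) = coeff n ((1 : R⟦X⟧) * P) :=
      ((eqUpTo_one hThigh).mul (EqUpTo.refl P)) n le_rfl
    rw [hF1, c1, hend, c2, one_mul]
  have : coeff n F = f' n := by rw [hF, coeff_mk]
  rw [← this, hchain, hP, ← card_partition_eq_coeff R n K (by omega)]

end PS

end
end Stmt13Aux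

open PowerSeries

/-- `f(n) ≡ p(n) (mod 4)`, where `f` is defined by
`∑ f(n) qⁿ = ∏_{i≥1} (1+q^{2i-1}) / ((1-q^{4i})(1+q^{4i-2})^2)`.  The defining
generating-function identity is taken in the cross-multiplied form
`(∑ f(n) qⁿ) · ∏_{i≥1}(1-q^{4i})(1+q^{4i-2})^2 = ∏_{i≥1}(1+q^{2i-1})`, stated
coefficientwise: the `m`-th coefficient of each side is already attained by the
partial products shown. `p(n)` is the number of partitions of `n`, realized as the
number of Young diagrams with `n` cells. -/
theorem stmt13 (f : ℕ → ℤ)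
    (hf : ∀ m : ℕ,
      PowerSeries.coeff m
        (PowerSeries.mk f *
          ∏ k ∈ Finset.range (m + 1),
            ((1 - (X : ℤ⟦X⟧) ^ (4 * (k + 1))) * (1 + (X : ℤ⟦X⟧) ^ (4 * k + 2)) ^ 2)) =
      PowerSeries.coeff m
        (∏ k ∈ Finset.range (m + 1), (1 + (X : ℤ⟦X⟧) ^ (2 * k + 1)))) :
    ∀ n : ℕ, f n ≡ (Nat.card {μ : YoungDiagram // μ.card = n} : ℤ) [ZMOD 4] := by
  intro n
  have hfR : ∀ m : ℕ,
      PowerSeries.coeff m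
        (PowerSeries.mk (fun j => ((f j : ℤ) : ZMod 4)) *
          ∏ k ∈ Finset.range (m + 1),
            ((1 - (X : (ZMod 4)⟦X⟧) ^ (4 * (k + 1))) *
              (1 + (X : (ZMod 4)⟦X⟧) ^ (4 * k + 2)) ^ 2)) =
      PowerSeries.coeff m
        (∏ k ∈ Finset.range (m + 1), (1 + (X : (ZMod 4)⟦X⟧) ^ (2 * k + 1))) := by
    intro m
    have h := congrArg (Int.castRingHom (ZMod 4)) (hf m)
    rw [show ∀ S : ℤ⟦X⟧, (Int.castRingHom (ZMod 4)) (PowerSeries.coeff m S) =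
        PowerSeries.coeff m (PowerSeries.map (Int.castRingHom (ZMod 4)) S) from
      fun S => (PowerSeries.coeff_map ..).symm,
      show ∀ S : ℤ⟦X⟧, (Int.castRingHom (ZMod 4)) (PowerSeries.coeff m S) =
        PowerSeries.coeff m (PowerSeries.map (Int.castRingHom (ZMod 4)) S) from
      fun S => (PowerSeries.coeff_map ..).symm] at h
    have hmk : PowerSeries.map (Int.castRingHom (ZMod 4)) (PowerSeries.mk f) =
        PowerSeries.mk (fun j => ((f j : ℤ) : ZMod 4)) := by
      ext j
      rw [PowerSeries.coeff_map, coeff_mk, coeff_mk]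
      rfl
    rw [map_mul, map_prod, hmk] at h
    simp only [map_prod, map_mul, map_pow, map_sub, map_add, map_one,
      PowerSeries.map_X] at h
    exact h
  have hkey := Stmt13Aux.key (R := ZMod 4) (by decide) (fun j => ((f j : ℤ) : ZMod 4)) hfR n
  have hcast : ((f n : ℤ) : ZMod 4) =
      ((Nat.card {μ : YoungDiagram // μ.card = n} : ℤ) : ZMod 4) := by
    push_cast
    rw [Stmt13Aux.card_young_eq_card_partition]
    exact hkey
  have := (ZMod.intCast_eq_intCast_iff _ _ _).mp hcast
  simpa using this
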